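/- Let x, r, a be real numbers with 0 < x < 1, r > 1, a > 0, let i, j ≥ 1 be integers, and fix a sign ϵ ∈ {+1, −1}. Then there exists ρ > 0 such that for every complex number z with |z| < ρ: f_{1,i}(z; a) · f_{1,j}(x^{ϵ(i+j)} z; a) = f_{1,i+j}(x^{ϵ j} z; a) · Δ_1(x^{ϵ i} z). (This is relation (4.7) of Lemma 4.5.) -/

import Mathlib

/-- The q-integer `[n]_x = (x^n - x^{-n})/(x - x^{-1})`, with real powers of `x`. -/
noncomputable def qint (x n : ℝ) : ℝ := (x ^ n - x ^ (-n)) / (x - x⁻¹)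

/-- The `m`-th coefficient of the exponent series defining the structure function
`f_{i,j}(z;a)` of the deformed W-superalgebra `W_{q,t}(A(M,N))`. -/
noncomputable def fCoeff (x r a : ℝ) (i j : ℤ) (m : ℕ) : ℝ :=
  (1 / (m : ℝ)) *
    (qint x ((r - 1) * m) * qint x (r * m) * qint x ((min i j : ℤ) * m) *
      qint x ((a - (max i j : ℤ)) * m)) /
    (qint x (m : ℝ) * qint x (a * m)) * (x - x⁻¹) ^ 2

/-- The `m`-th term of the exponent series of `f_{i,j}(z;a)` (including the minus sign),
indexed so that `m : ℕ` corresponds to the power `z^(m+1)`. -/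
noncomputable def fTerm (x r a : ℝ) (i j : ℤ) (z : ℂ) (m : ℕ) : ℂ :=
  -((fCoeff x r a i j (m + 1) : ℝ) : ℂ) * z ^ (m + 1)

/-- The structure function
`f_{i,j}(z;a) = exp(-Σ_{m≥1} c_m z^m)` of `W_{q,t}(A(M,N))`. -/
noncomputable def fFun (x r a : ℝ) (i j : ℤ) (z : ℂ) : ℂ :=
  Complex.exp (∑' m : ℕ, fTerm x r a i j z m)

/-- The real power `x^t`, regarded as a complex number. -/
noncomputable def xp (x t : ℝ) : ℂ := ((x ^ t : ℝ) : ℂ)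

/-- The function `Δ_i(z) = (1 - x^{2r-i}z)(1 - x^{-2r+i}z)/((1 - x^i z)(1 - x^{-i}z))`. -/
noncomputable def Delta (x r : ℝ) (i : ℝ) (z : ℂ) : ℂ :=
  ((1 - xp x (2 * r - i) * z) * (1 - xp x (-(2 * r) + i) * z)) /
    ((1 - xp x i * z) * (1 - xp x (-i) * z))


set_option maxHeartbeats 1000000

variable {x : ℝ}

lemma d_pos (hx0 : 0 < x) (hx1 : x < 1) : 0 < x⁻¹ - x := by
  have h : 1 < x⁻¹ := one_lt_inv_iff₀.mpr ⟨hx0, hx1⟩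
  linarith

lemma qint_pos (hx0 : 0 < x) (hx1 : x < 1) {t : ℝ} (ht : 0 < t) : 0 < qint x t := by
  unfold qint
  apply div_pos_of_neg_of_neg
  · have : x ^ t < x ^ (-t) := Real.rpow_lt_rpow_of_exponent_gt hx0 hx1 (by linarith)
    linarith
  · have := d_pos hx0 hx1; linarith

lemma qint_abs_le (hx0 : 0 < x) (hx1 : x < 1) (t : ℝ) :
    |qint x t| ≤ 2 * x ^ (-|t|) / (x⁻¹ - x) := by
  unfold qint
  rw [abs_div, abs_of_neg (by have := d_pos hx0 hx1; linarith : x - x⁻¹ < 0), neg_sub]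
  have h1 : x ^ t ≤ x ^ (-|t|) := Real.rpow_le_rpow_of_exponent_ge hx0 hx1.le (neg_abs_le t)
  have h2 : x ^ (-t) ≤ x ^ (-|t|) :=
    Real.rpow_le_rpow_of_exponent_ge hx0 hx1.le (by have := le_abs_self t; linarith)
  have h3 : |x ^ t - x ^ (-t)| ≤ 2 * x ^ (-|t|) := by
    have p1 : (0:ℝ) < x ^ t := Real.rpow_pos_of_pos hx0 _
    have p2 : (0:ℝ) < x ^ (-t) := Real.rpow_pos_of_pos hx0 _
    rw [abs_sub_le_iff]; constructor <;> linarith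
  gcongr
  exact (d_pos hx0 hx1).le

lemma qint_lower (hx0 : 0 < x) (hx1 : x < 1) {t t0 : ℝ} (h0 : 0 < t0) (ht : t0 ≤ t) :
    x ^ (-t) * (1 - x ^ (2*t0)) / (x⁻¹ - x) ≤ qint x t := by
  have hd := d_pos hx0 hx1
  have hq : qint x t = (x ^ (-t) - x ^ t) / (x⁻¹ - x) := by
    rw [qint, ← neg_div_neg_eq]; ring_nf
  rw [hq]
  have hnum : x ^ (-t) * (1 - x ^ (2*t0)) ≤ x ^ (-t) - x ^ t := by
    have e1 : x ^ (-t) * x ^ (2*t0) ≥ x ^ t := by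
      rw [← Real.rpow_add hx0]
      exact Real.rpow_le_rpow_of_exponent_ge hx0 hx1.le (by linarith)
    nlinarith [Real.rpow_pos_of_pos hx0 (-t)]
  gcongr

private lemma fchelp (s N n1 n2 n3 n4 n6 : ℝ) (hs : s ≠ 0) (hN : N ≠ 0) (h3 : n3 ≠ 0) (h6 : n6 ≠ 0) :
    (1/N) * (n1/s * (n2/s) * (n3/s) * (n4/s)) / (n3/s * (n6/s)) * s^2
      = (1/N) * (n1 * n2 * n4 / n6) := by
  field_simp

lemma fCoeff_eq (x r a : ℝ) (hx0 : 0 < x) (hx1 : x < 1) (ha : 0 < a) (k : ℤ)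
    (hk : 1 ≤ k) (n : ℕ) (hn : 1 ≤ n) :
    fCoeff x r a 1 k n = (1/(n:ℝ)) *
      ((x^(r*(n:ℝ)) * (x^((n:ℝ)))⁻¹ - (x^(r*(n:ℝ)))⁻¹ * x^((n:ℝ))) *
        (x^(r*(n:ℝ)) - (x^(r*(n:ℝ)))⁻¹) *
        (x^(a*(n:ℝ)) * (x^((k:ℝ)*(n:ℝ)))⁻¹ - (x^(a*(n:ℝ)))⁻¹ * x^((k:ℝ)*(n:ℝ))) /
        (x^(a*(n:ℝ)) - (x^(a*(n:ℝ)))⁻¹)) := by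
  have hn0 : (0:ℝ) < (n:ℝ) := by exact_mod_cast Nat.lt_of_lt_of_le Nat.zero_lt_one hn
  have hadd : ∀ p q : ℝ, x ^ (p + q) = x ^ p * x ^ q := fun p q => Real.rpow_add hx0 p q
  have hneg : ∀ p : ℝ, x ^ (-p) = (x ^ p)⁻¹ := fun p => Real.rpow_neg hx0.le p
  unfold fCoeff qint
  simp only [min_eq_left hk, max_eq_right hk, Int.cast_one, one_mul]
  set N := (n:ℝ) with hNdef
  have e1 : x ^ ((r - 1) * N) = x ^ (r*N) * (x ^ N)⁻¹ := by
    rw [show (r-1)*N = r*N + -N by ring, hadd, hneg]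
  have e2 : x ^ (-((r - 1) * N)) = (x ^ (r*N))⁻¹ * x ^ N := by
    rw [show -((r-1)*N) = -(r*N) + N by ring, hadd, hneg]
  have e3 : x ^ (-(r * N)) = (x ^ (r*N))⁻¹ := hneg _
  have e4 : x ^ (-N) = (x ^ N)⁻¹ := hneg N
  have e5 : x ^ ((a - (k:ℝ)) * N) = x^(a*N) * (x^((k:ℝ)*N))⁻¹ := by
    rw [show (a - (k:ℝ))*N = a*N + -((k:ℝ)*N) by ring, hadd, hneg]
  have e6 : x ^ (-((a - (k:ℝ)) * N)) = (x^(a*N))⁻¹ * x^((k:ℝ)*N) := by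
    rw [show -((a - (k:ℝ))*N) = -(a*N) + (k:ℝ)*N by ring, hadd, hneg]
  have e11 : x ^ (-(a*N)) = (x^(a*N))⁻¹ := hneg _
  have hs : x - x⁻¹ ≠ 0 := by
    have h : 1 < x⁻¹ := one_lt_inv_iff₀.mpr ⟨hx0, hx1⟩
    intro h'; nlinarith
  have hBlt : x ^ N < 1 := Real.rpow_lt_one hx0.le hx1 hn0
  have hBpos : 0 < x ^ N := Real.rpow_pos_of_pos hx0 _
  have hB1 : x ^ N - (x ^ N)⁻¹ ≠ 0 := by
    have : 1 < (x ^ N)⁻¹ := one_lt_inv_iff₀.mpr ⟨hBpos, hBlt⟩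
    intro h'; nlinarith
  have hClt : x ^ (a*N) < 1 := Real.rpow_lt_one hx0.le hx1 (by positivity)
  have hCpos : 0 < x ^ (a*N) := Real.rpow_pos_of_pos hx0 _
  have hC1 : x ^ (a*N) - (x ^ (a*N))⁻¹ ≠ 0 := by
    have : 1 < (x ^ (a*N))⁻¹ := one_lt_inv_iff₀.mpr ⟨hCpos, hClt⟩
    intro h'; nlinarith
  rw [e1, e2, e3, e4, e5, e6, e11]
  exact fchelp _ _ _ _ _ _ _ hs hn0.ne' hB1 hC1


private lemma divshape (X Y Z W N D u v : ℝ) (hD : D ≠ 0) (hN : N ≠ 0)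
    (h : X + Y*(u*v) - Z*v = W*u*D) :
    (1/N)*(X/D) + (1/N)*(Y/D)*(u*v) = (1/N)*(Z/D)*v + (1/N)*W*u := by
  have : (1/N)*(X/D) + (1/N)*(Y/D)*(u*v) - ((1/N)*(Z/D)*v + (1/N)*W*u)
      = (1/(N*D)) * ((X + Y*(u*v) - Z*v) - W*u*D) := by
    field_simp
    ring
  rw [h] at this
  simp at this
  linear_combination this

lemma keyalg1 (A B C u v N : ℝ) (hA : A ≠ 0) (hB : B ≠ 0) (hC : C ≠ 0)
    (hu : u ≠ 0) (hv : v ≠ 0) (hN : N ≠ 0) (hCC : C - C⁻¹ ≠ 0) :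
    (1/N) * ((A*B⁻¹ - A⁻¹*B) * (A - A⁻¹) * (C*u⁻¹ - C⁻¹*u) / (C - C⁻¹))
      + (1/N) * ((A*B⁻¹ - A⁻¹*B) * (A - A⁻¹) * (C*v⁻¹ - C⁻¹*v) / (C - C⁻¹)) * (u * v)
      = (1/N) * ((A*B⁻¹ - A⁻¹*B) * (A - A⁻¹) * (C*(u*v)⁻¹ - C⁻¹*(u*v)) / (C - C⁻¹)) * v
        + (1/N) * (A*A*B⁻¹ + A⁻¹*A⁻¹*B - B - B⁻¹) * u := by
  apply divshape _ _ _ _ _ _ _ _ hCC hN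
  field_simp
  ring

lemma keyalg2 (A B C u v N : ℝ) (hA : A ≠ 0) (hB : B ≠ 0) (hC : C ≠ 0)
    (hu : u ≠ 0) (hv : v ≠ 0) (hN : N ≠ 0) (hCC : C - C⁻¹ ≠ 0) :
    (1/N) * ((A*B⁻¹ - A⁻¹*B) * (A - A⁻¹) * (C*u⁻¹ - C⁻¹*u) / (C - C⁻¹))
      + (1/N) * ((A*B⁻¹ - A⁻¹*B) * (A - A⁻¹) * (C*v⁻¹ - C⁻¹*v) / (C - C⁻¹)) * (u * v)⁻¹
      = (1/N) * ((A*B⁻¹ - A⁻¹*B) * (A - A⁻¹) * (C*(u*v)⁻¹ - C⁻¹*(u*v)) / (C - C⁻¹)) * v⁻¹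
        + (1/N) * (A*A*B⁻¹ + A⁻¹*A⁻¹*B - B - B⁻¹) * u⁻¹ := by
  have h2 : (1/N) * ((A*B⁻¹ - A⁻¹*B) * (A - A⁻¹) * (C*v⁻¹ - C⁻¹*v) / (C - C⁻¹)) * (u * v)⁻¹
      = (1/N) * ((A*B⁻¹ - A⁻¹*B) * (A - A⁻¹) * (C*v⁻¹ - C⁻¹*v) / (C - C⁻¹)) * (u⁻¹ * v⁻¹) := by
    rw [mul_inv]
  rw [h2]
  apply divshape _ _ _ _ _ _ _ _ hCC hN
  field_simp
  ring

lemma key_identity (x r a : ℝ) (hx0 : 0 < x) (hx1 : x < 1) (ha : 0 < a) (i j : ℤ)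
    (hi : 1 ≤ i) (hj : 1 ≤ j) (e : ℝ) (he : e = 1 ∨ e = -1) (n : ℕ) (hn : 1 ≤ n) :
    fCoeff x r a 1 i n + fCoeff x r a 1 j n * (x ^ (e * ((i:ℝ) + (j:ℝ)))) ^ n
      = fCoeff x r a 1 (i+j) n * (x ^ (e * (j:ℝ))) ^ n
        + (1/(n:ℝ)) * ((x ^ (2*r - 1)) ^ n + (x ^ (-(2*r) + 1)) ^ n
            - (x ^ (1:ℝ)) ^ n - (x ^ (-1:ℝ)) ^ n) * (x ^ (e * (i:ℝ))) ^ n := by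
  have hij : (1:ℤ) ≤ i + j := by omega
  have hn0 : (0:ℝ) < (n:ℝ) := by exact_mod_cast Nat.lt_of_lt_of_le Nat.zero_lt_one hn
  have hxne : ∀ c : ℝ, x ^ c ≠ 0 := fun c => (Real.rpow_pos_of_pos hx0 c).ne'
  have hadd : ∀ p q : ℝ, x ^ (p + q) = x ^ p * x ^ q := fun p q => Real.rpow_add hx0 p q
  have hneg : ∀ p : ℝ, x ^ (-p) = (x ^ p)⁻¹ := fun p => Real.rpow_neg hx0.le p
  have hP : ∀ c : ℝ, (x ^ c) ^ n = x ^ (c * (n:ℝ)) := fun c => by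
    rw [← Real.rpow_natCast (x ^ c) n, ← Real.rpow_mul hx0.le]
  rw [fCoeff_eq x r a hx0 hx1 ha i hi n hn, fCoeff_eq x r a hx0 hx1 ha j hj n hn,
    fCoeff_eq x r a hx0 hx1 ha (i+j) hij n hn]
  push_cast
  set N := (n:ℝ) with hNdef
  have eij : x ^ (((i:ℝ) + (j:ℝ)) * N) = x ^ ((i:ℝ)*N) * x ^ ((j:ℝ)*N) := by
    rw [show ((i:ℝ)+(j:ℝ))*N = (i:ℝ)*N + (j:ℝ)*N by ring, hadd]
  have g4 : (x ^ (2*r - 1))^n = x^(r*N) * x^(r*N) * (x^N)⁻¹ := by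
    rw [hP, show (2*r-1)*N = r*N + r*N + -N by ring, hadd, hadd, hneg]
  have g5 : (x ^ (-(2*r) + 1))^n = (x^(r*N))⁻¹ * (x^(r*N))⁻¹ * x^N := by
    rw [hP, show (-(2*r)+1)*N = -(r*N) + -(r*N) + N by ring, hadd, hadd, hneg]
  have g6 : (x ^ (1:ℝ))^n = x ^ N := by rw [hP, one_mul]
  have g7 : (x ^ (-1:ℝ))^n = (x ^ N)⁻¹ := by rw [hP, show (-1:ℝ)*N = -N by ring, hneg]
  have hClt : x ^ (a*N) < 1 := Real.rpow_lt_one hx0.le hx1 (by positivity)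
  have hCpos : 0 < x ^ (a*N) := Real.rpow_pos_of_pos hx0 _
  have hC1 : x ^ (a*N) - (x ^ (a*N))⁻¹ ≠ 0 := by
    have : 1 < (x ^ (a*N))⁻¹ := one_lt_inv_iff₀.mpr ⟨hCpos, hClt⟩
    intro h'; nlinarith
  have hA : x ^ (r*N) ≠ 0 := hxne _
  have hB : x ^ N ≠ 0 := hxne _
  have hC : x ^ (a*N) ≠ 0 := hxne _
  have hu : x ^ ((i:ℝ)*N) ≠ 0 := hxne _
  have hv : x ^ ((j:ℝ)*N) ≠ 0 := hxne _
  rcases he with rfl | rfl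
  · have g1 : (x ^ (1 * ((i:ℝ) + (j:ℝ))))^n = x ^ ((i:ℝ)*N) * x ^ ((j:ℝ)*N) := by
      rw [hP, show (1*((i:ℝ)+(j:ℝ)))*N = (i:ℝ)*N + (j:ℝ)*N by ring, hadd]
    have g2 : (x ^ (1 * (j:ℝ)))^n = x ^ ((j:ℝ)*N) := by
      rw [hP, show (1*(j:ℝ))*N = (j:ℝ)*N by ring]
    have g3 : (x ^ (1 * (i:ℝ)))^n = x ^ ((i:ℝ)*N) := by
      rw [hP, show (1*(i:ℝ))*N = (i:ℝ)*N by ring]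
    rw [eij, g1, g2, g3, g4, g5, g6, g7]
    exact keyalg1 _ _ _ _ _ _ hA hB hC hu hv hn0.ne' hC1
  · have g1 : (x ^ (-1 * ((i:ℝ) + (j:ℝ))))^n = (x ^ ((i:ℝ)*N) * x ^ ((j:ℝ)*N))⁻¹ := by
      rw [hP, show (-1*((i:ℝ)+(j:ℝ)))*N = -((i:ℝ)*N + (j:ℝ)*N) by ring, hneg, hadd]
    have g2 : (x ^ (-1 * (j:ℝ)))^n = (x ^ ((j:ℝ)*N))⁻¹ := by
      rw [hP, show (-1*(j:ℝ))*N = -((j:ℝ)*N) by ring, hneg]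
    have g3 : (x ^ (-1 * (i:ℝ)))^n = (x ^ ((i:ℝ)*N))⁻¹ := by
      rw [hP, show (-1*(i:ℝ))*N = -((i:ℝ)*N) by ring, hneg]
    rw [eij, g1, g2, g3, g4, g5, g6, g7]
    exact keyalg2 _ _ _ _ _ _ hA hB hC hu hv hn0.ne' hC1

private lemma dhelp (p1 p2 p4 p6 c d : ℝ) (hd : d ≠ 0) (hp6 : p6 ≠ 0) (hc : 1 - c ≠ 0) :
    1 * ((2*p1/d) * (2*p2/d) * (2*p4/d)) / (p6 * (1 - c) / d) * d^2
      = 8/(1-c) * (p1*p2*p4/p6) := by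
  field_simp
  ring

private lemma cancelhelp (T p1 p2 p4 q5 q6 S : ℝ) (h5 : q5 ≠ 0) :
    T * (p1 * p2 * q5 * p4) / (q5 * q6) * S = T * (p1 * p2 * p4) / q6 * S := by
  rcases eq_or_ne q6 0 with h | h
  · simp [h]
  · field_simp

lemma fCoeff_abs_le (x r a : ℝ) (hx0 : 0 < x) (hx1 : x < 1) (hr : 1 < r) (ha : 0 < a)
    (k : ℤ) (hk : 1 ≤ k) (n : ℕ) (hn : 1 ≤ n) :
    |fCoeff x r a 1 k n| ≤ (8 / (1 - x^(2*a)))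
      * (x ^ (1 + a - 2*r - |a - (k:ℝ)|)) ^ n := by
  have hd := d_pos hx0 hx1
  have hn0 : (0:ℝ) < (n:ℝ) := by exact_mod_cast Nat.lt_of_lt_of_le Nat.zero_lt_one hn
  have hn1 : (1:ℝ) ≤ (n:ℝ) := by exact_mod_cast hn
  have hxpos : ∀ c : ℝ, 0 < x ^ c := fun c => Real.rpow_pos_of_pos hx0 c
  have hadd : ∀ p q : ℝ, x ^ (p + q) = x ^ p * x ^ q := fun p q => Real.rpow_add hx0 p q
  set N := (n:ℝ) with hNdef
  have hx2a : x ^ (2*a) < 1 := Real.rpow_lt_one hx0.le hx1 (by positivity)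
  have h2a0 : 0 < 1 - x ^ (2*a) := by linarith
  have hq6 : x^(-(a*N)) * (1 - x^(2*a)) / (x⁻¹ - x) ≤ qint x (a*N) :=
    qint_lower hx0 hx1 ha (by nlinarith)
  have hq5pos : 0 < qint x N := qint_pos hx0 hx1 hn0
  have hq6pos : 0 < qint x (a*N) := qint_pos hx0 hx1 (by positivity)
  have hq6bpos : 0 < x^(-(a*N)) * (1 - x^(2*a)) / (x⁻¹ - x) := by positivity
  have hb1 := qint_abs_le hx0 hx1 ((r-1)*N)
  rw [abs_of_nonneg (by nlinarith : (0:ℝ) ≤ (r-1)*N)] at hb1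
  have hb2 := qint_abs_le hx0 hx1 (r*N)
  rw [abs_of_nonneg (by nlinarith : (0:ℝ) ≤ r*N)] at hb2
  have hb4 := qint_abs_le hx0 hx1 ((a - (k:ℝ))*N)
  rw [abs_mul, abs_of_nonneg hn0.le] at hb4
  have heq : |fCoeff x r a 1 k n| = 1/N * (|qint x ((r-1)*N)| * |qint x (r*N)| * qint x N
      * |qint x ((a - (k:ℝ))*N)|) / (qint x N * qint x (a*N)) * (x⁻¹ - x)^2 := by
    unfold fCoeff
    rw [min_eq_left hk, max_eq_right hk]
    push_cast
    simp only [one_mul, abs_mul, abs_div, abs_pow, abs_one]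
    rw [abs_of_pos hn0, abs_of_pos hq5pos, abs_of_pos hq6pos,
      abs_of_neg (show x - x⁻¹ < 0 by linarith), neg_sub]
  rw [heq, cancelhelp _ _ _ _ _ _ _ hq5pos.ne']
  have hle1 : (1:ℝ)/N ≤ 1 := by
    rw [div_le_one hn0]; exact hn1
  have hnum : |qint x ((r-1)*N)| * |qint x (r*N)| * |qint x ((a - (k:ℝ))*N)|
      ≤ (2 * x^(-((r-1)*N)) / (x⁻¹-x)) * (2 * x^(-(r*N)) / (x⁻¹-x))
        * (2 * x^(-(|a - (k:ℝ)| * N)) / (x⁻¹-x)) := by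
    refine mul_le_mul (mul_le_mul hb1 hb2 (abs_nonneg _) (by positivity)) hb4
      (abs_nonneg _) (by positivity)
  have hT1 : 1/N * (|qint x ((r-1)*N)| * |qint x (r*N)| * |qint x ((a - (k:ℝ))*N)|)
      ≤ 1 * ((2 * x^(-((r-1)*N)) / (x⁻¹-x)) * (2 * x^(-(r*N)) / (x⁻¹-x))
        * (2 * x^(-(|a - (k:ℝ)| * N)) / (x⁻¹-x))) :=
    mul_le_mul hle1 hnum (by positivity) one_pos.le
  have hT2 : 1/N * (|qint x ((r-1)*N)| * |qint x (r*N)| * |qint x ((a - (k:ℝ))*N)|)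
        / qint x (a*N)
      ≤ 1 * ((2 * x^(-((r-1)*N)) / (x⁻¹-x)) * (2 * x^(-(r*N)) / (x⁻¹-x))
        * (2 * x^(-(|a - (k:ℝ)| * N)) / (x⁻¹-x))) / (x^(-(a*N)) * (1 - x^(2*a)) / (x⁻¹ - x)) :=
    div_le_div₀ (by positivity) hT1 hq6bpos hq6
  have hstep := mul_le_mul_of_nonneg_right hT2 (sq_nonneg (x⁻¹ - x))
  refine hstep.trans (le_of_eq ?_)
  rw [dhelp _ _ _ _ _ _ hd.ne' (hxpos _).ne' h2a0.ne']
  have hcomb : x^(-((r-1)*N)) * x^(-(r*N)) * x^(-(|a - (k:ℝ)| * N)) / x^(-(a*N))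
      = (x ^ (1 + a - 2*r - |a - (k:ℝ)|)) ^ n := by
    rw [div_eq_mul_inv, ← Real.rpow_neg hx0.le, neg_neg, ← hadd, ← hadd, ← hadd,
      ← Real.rpow_natCast (x ^ (1 + a - 2*r - |a - (k:ℝ)|)) n, ← Real.rpow_mul hx0.le]
    congr 1
    ring
  rw [hcomb]

lemma summable_fTerm (x r a : ℝ) (hx0 : 0 < x) (hx1 : x < 1) (hr : 1 < r) (ha : 0 < a)
    (k : ℤ) (hk : 1 ≤ k) (w : ℂ)
    (hw : ‖w‖ < x ^ (2*r + |a - (k:ℝ)| - 1 - a)) :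
    Summable (fTerm x r a 1 k w) := by
  set δ := 1 + a - 2*r - |a - (k:ℝ)| with hδ
  set q := x ^ δ * ‖w‖ with hq
  have hq0 : 0 ≤ q := by positivity
  have hq1 : q < 1 := by
    calc q < x ^ δ * x ^ (2*r + |a - (k:ℝ)| - 1 - a) :=
          mul_lt_mul_of_pos_left hw (Real.rpow_pos_of_pos hx0 δ)
    _ = 1 := by
        rw [← Real.rpow_add hx0, show δ + (2*r + |a - (k:ℝ)| - 1 - a) = 0 by rw [hδ]; ring,
          Real.rpow_zero]
  have hsum : Summable (fun m : ℕ => (8 / (1 - x^(2*a))) * q ^ (m+1)) := by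
    have := (summable_geometric_of_lt_one hq0 hq1).mul_left ((8 / (1 - x^(2*a))) * q)
    refine this.congr fun m => ?_
    rw [pow_succ]
    ring
  refine Summable.of_norm_bounded hsum fun m => ?_
  have h1 : ‖fTerm x r a 1 k w m‖ = |fCoeff x r a 1 k (m+1)| * ‖w‖^(m+1) := by
    rw [fTerm, norm_mul, norm_neg, Complex.norm_real, norm_pow, Real.norm_eq_abs]
  rw [h1, hq, mul_pow]
  have hb := fCoeff_abs_le x r a hx0 hx1 hr ha k hk (m+1) (by omega)
  calc |fCoeff x r a 1 k (m+1)| * ‖w‖^(m+1)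
      ≤ (8 / (1 - x^(2*a))) * (x ^ δ) ^ (m+1) * ‖w‖^(m+1) := by
        have : (0:ℝ) ≤ ‖w‖^(m+1) := by positivity
        exact mul_le_mul_of_nonneg_right hb this
    _ = 8 / (1 - x^(2*a)) * ((x ^ δ)^(m+1) * ‖w‖^(m+1)) := by ring

lemma hasSum_neg_log' {u : ℂ} (hu : ‖u‖ < 1) :
    HasSum (fun m : ℕ => u^(m+1) / ((m:ℂ)+1)) (-Complex.log (1 - u)) := by
  have h := Complex.hasSum_taylorSeries_neg_log hu
  have h2 := (hasSum_nat_add_iff' (f := fun n : ℕ => u^n/(n:ℂ)) 1).mpr h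
  simpa using h2

lemma one_sub_ne {u : ℂ} (hu : ‖u‖ < 1) : 1 - u ≠ 0 := by
  intro h
  have h1 : (1:ℂ) = u := by linear_combination h
  rw [← h1] at hu
  simp at hu

lemma Delta_hasSum (x r : ℝ) (w : ℂ)
    (h1 : ‖xp x (2*r - 1) * w‖ < 1) (h2 : ‖xp x (-(2*r) + 1) * w‖ < 1)
    (h3 : ‖xp x (1:ℝ) * w‖ < 1) (h4 : ‖xp x (-1:ℝ) * w‖ < 1) :
    HasSum (fun m : ℕ => -(((xp x (2*r-1) * w)^(m+1) + (xp x (-(2*r)+1) * w)^(m+1)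
        - (xp x (1:ℝ) * w)^(m+1) - (xp x (-1:ℝ) * w)^(m+1)) / ((m:ℂ)+1)))
      (Complex.log (1 - xp x (2*r-1) * w) + Complex.log (1 - xp x (-(2*r)+1) * w)
        - Complex.log (1 - xp x (1:ℝ) * w) - Complex.log (1 - xp x (-1:ℝ) * w)) := by
  have H1 := hasSum_neg_log' h1
  have H2 := hasSum_neg_log' h2
  have H3 := hasSum_neg_log' h3
  have H4 := hasSum_neg_log' h4
  have H := (H3.add H4).sub (H1.add H2)
  rw [show Complex.log (1 - xp x (2*r-1) * w) + Complex.log (1 - xp x (-(2*r)+1) * w)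
        - Complex.log (1 - xp x (1:ℝ) * w) - Complex.log (1 - xp x (-1:ℝ) * w)
      = (-Complex.log (1 - xp x (1:ℝ) * w) + -Complex.log (1 - xp x (-1:ℝ) * w))
        - (-Complex.log (1 - xp x (2*r-1) * w) + -Complex.log (1 - xp x (-(2*r)+1) * w))
      by ring]
  refine H.congr_fun fun m => ?_
  ring

lemma Delta_eq_exp (x r : ℝ) (w : ℂ)
    (h1 : ‖xp x (2*r - 1) * w‖ < 1) (h2 : ‖xp x (-(2*r) + 1) * w‖ < 1)
    (h3 : ‖xp x (1:ℝ) * w‖ < 1) (h4 : ‖xp x (-1:ℝ) * w‖ < 1) :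
    Delta x r 1 w = Complex.exp
      (Complex.log (1 - xp x (2*r-1) * w) + Complex.log (1 - xp x (-(2*r)+1) * w)
        - Complex.log (1 - xp x (1:ℝ) * w) - Complex.log (1 - xp x (-1:ℝ) * w)) := by
  have n1 := one_sub_ne h1
  have n2 := one_sub_ne h2
  have n3 := one_sub_ne h3
  have n4 := one_sub_ne h4
  rw [Delta, Complex.exp_sub, Complex.exp_sub, Complex.exp_add,
    Complex.exp_log n1, Complex.exp_log n2, Complex.exp_log n3, Complex.exp_log n4]
  rw [div_div]

/-- Relation (4.7) of Lemma 4.5: for a sign `e ∈ {+1,-1}`,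
`f_{1,i}(z;a) f_{1,j}(x^{e(i+j)}z;a) = f_{1,i+j}(x^{ej}z;a) Δ_1(x^{ei}z)`
for `z` of sufficiently small modulus. -/
theorem statement3 (x r a : ℝ) (hx0 : 0 < x) (hx1 : x < 1) (hr : 1 < r) (ha : 0 < a)
    (i j : ℤ) (hi : 1 ≤ i) (hj : 1 ≤ j) (e : ℝ) (he : e = 1 ∨ e = -1) :
    ∃ ρ : ℝ, 0 < ρ ∧ ∀ z : ℂ, ‖z‖ < ρ →
      fFun x r a 1 i z * fFun x r a 1 j (xp x (e * ((i : ℝ) + (j : ℝ))) * z) =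
        fFun x r a 1 (i + j) (xp x (e * (j : ℝ)) * z) * Delta x r 1 (xp x (e * (i : ℝ)) * z) := by
  obtain ⟨he1, he2⟩ : -1 ≤ e ∧ e ≤ 1 := by rcases he with rfl | rfl <;> norm_num
  have hi' : (1:ℝ) ≤ (i:ℝ) := by exact_mod_cast hi
  have hj' : (1:ℝ) ≤ (j:ℝ) := by exact_mod_cast hj
  have hija : ((i+j : ℤ):ℝ) = (i:ℝ) + (j:ℝ) := by push_cast; ring
  have habs1 : (0:ℝ) ≤ |a - (i:ℝ)| := abs_nonneg _
  have habs2 : (0:ℝ) ≤ |a - (j:ℝ)| := abs_nonneg _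
  have habs3 : (0:ℝ) ≤ |a - ((i:ℝ)+(j:ℝ))| := abs_nonneg _
  set R : ℝ := 2*r + a + |a - (i:ℝ)| + |a - (j:ℝ)| + |a - ((i:ℝ)+(j:ℝ))|
      + 2*((i:ℝ)+(j:ℝ)) + 10 with hR
  refine ⟨x ^ R, Real.rpow_pos_of_pos hx0 R, fun z hz => ?_⟩
  have hz' : ‖z‖ < x ^ R := hz
  have hzc : ∀ c : ℝ, c ≤ R → ‖z‖ < x ^ c := fun c hc =>
    lt_of_lt_of_le hz' (Real.rpow_le_rpow_of_exponent_ge hx0 hx1.le hc)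
  have hxp_norm : ∀ t : ℝ, ‖xp x t‖ = x ^ t := fun t => by
    rw [xp, Complex.norm_real, Real.norm_eq_abs, abs_of_pos (Real.rpow_pos_of_pos hx0 t)]
  have hsmall : ∀ t c : ℝ, c - t ≤ R → ‖xp x t * z‖ < x ^ c := by
    intro t c hc
    rw [norm_mul, hxp_norm]
    have h1 : ‖z‖ < x ^ (c - t) := hzc _ hc
    calc x ^ t * ‖z‖ < x ^ t * x ^ (c - t) :=
          mul_lt_mul_of_pos_left h1 (Real.rpow_pos_of_pos hx0 t)
      _ = x ^ c := by rw [← Real.rpow_add hx0, show t + (c - t) = c by ring]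
  have hxpmul : ∀ t s : ℝ, xp x t * (xp x s * z) = xp x (t + s) * z := by
    intro t s
    rw [xp, xp, xp, Real.rpow_add hx0]
    push_cast
    ring
  have hei : -(1:ℝ) * (i:ℝ) ≤ e * (i:ℝ) := by nlinarith
  have hej : -(1:ℝ) * (j:ℝ) ≤ e * (j:ℝ) := by nlinarith
  have heij : -(1:ℝ) * ((i:ℝ)+(j:ℝ)) ≤ e * ((i:ℝ)+(j:ℝ)) := by nlinarith
  have hS1 : Summable (fTerm x r a 1 i z) := by
    refine summable_fTerm x r a hx0 hx1 hr ha i hi z ?_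
    refine hzc _ ?_
    rw [hR]; linarith
  have hS2 : Summable (fTerm x r a 1 j (xp x (e * ((i:ℝ) + (j:ℝ))) * z)) := by
    refine summable_fTerm x r a hx0 hx1 hr ha j hj _ ?_
    refine hsmall _ _ ?_
    rw [hR]; linarith
  have hS3 : Summable (fTerm x r a 1 (i+j) (xp x (e * (j:ℝ)) * z)) := by
    refine summable_fTerm x r a hx0 hx1 hr ha (i+j) (by omega) _ ?_
    rw [hija]
    refine hsmall _ _ ?_
    rw [hR]; linarith
  have n1 : ‖xp x (2*r - 1) * (xp x (e * (i:ℝ)) * z)‖ < 1 := by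
    rw [hxpmul]
    have := hsmall (2*r - 1 + e * (i:ℝ)) 0 (by rw [hR]; linarith)
    rwa [Real.rpow_zero] at this
  have n2 : ‖xp x (-(2*r) + 1) * (xp x (e * (i:ℝ)) * z)‖ < 1 := by
    rw [hxpmul]
    have := hsmall (-(2*r) + 1 + e * (i:ℝ)) 0 (by rw [hR]; linarith)
    rwa [Real.rpow_zero] at this
  have n3 : ‖xp x (1:ℝ) * (xp x (e * (i:ℝ)) * z)‖ < 1 := by
    rw [hxpmul]
    have := hsmall (1 + e * (i:ℝ)) 0 (by rw [hR]; linarith)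
    rwa [Real.rpow_zero] at this
  have n4 : ‖xp x (-1:ℝ) * (xp x (e * (i:ℝ)) * z)‖ < 1 := by
    rw [hxpmul]
    have := hsmall (-1 + e * (i:ℝ)) 0 (by rw [hR]; linarith)
    rwa [Real.rpow_zero] at this
  have HD := Delta_hasSum x r (xp x (e * (i:ℝ)) * z) n1 n2 n3 n4
  have HDe := Delta_eq_exp x r (xp x (e * (i:ℝ)) * z) n1 n2 n3 n4
  have hpt : ∀ m : ℕ, fTerm x r a 1 i z m
        + fTerm x r a 1 j (xp x (e * ((i:ℝ) + (j:ℝ))) * z) m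
      = fTerm x r a 1 (i+j) (xp x (e * (j:ℝ)) * z) m
        + -(((xp x (2*r-1) * (xp x (e * (i:ℝ)) * z))^(m+1)
            + (xp x (-(2*r)+1) * (xp x (e * (i:ℝ)) * z))^(m+1)
            - (xp x (1:ℝ) * (xp x (e * (i:ℝ)) * z))^(m+1)
            - (xp x (-1:ℝ) * (xp x (e * (i:ℝ)) * z))^(m+1)) / ((m:ℂ)+1)) := by
    intro m
    have H := key_identity x r a hx0 hx1 ha i j hi hj e he (m+1) (by omega)
    have Hc := congrArg (fun t : ℝ => (t : ℂ)) H
    push_cast at Hc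
    simp only [fTerm, xp]
    push_cast
    linear_combination (-(z^(m+1))) * Hc
  rw [fFun, fFun, fFun, HDe, ← Complex.exp_add, ← Complex.exp_add]
  congr 1
  have HL := hS1.hasSum.add hS2.hasSum
  have HR' := hS3.hasSum.add HD
  refine HL.unique ?_
  refine HR'.congr_fun fun m => hpt m
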